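/- Let P be a finite partially ordered set. Then ∑_{x ≤ y in P} μ(x,y) = ∑_{k ≥ 0} (−1)^k c_k, where μ is the Möbius function of the incidence algebra of P and c_k is the total number of chains x_0 < x_1 < ⋯ < x_k of length k in P. (The common value is the Euler characteristic of the order complex of P.) -/

import Mathlib

open IncidenceAlgebra Finset

attribute [local instance 10] Classical.propDecidable

namespace EulerCharAux

variable {P : Type*} [PartialOrder P] [Fintype P] [LocallyFiniteOrder P] [DecidableEq P]
  [DecidableRel ((· ≤ ·) : P → P → Prop)]

/-- The "strictly less" indicator in the incidence algebra. -/
noncomputable def eta (P : Type*) [PartialOrder P] [LocallyFiniteOrder P] [DecidableEq P]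
    [DecidableRel ((· ≤ ·) : P → P → Prop)] : IncidenceAlgebra ℤ P := zeta ℤ - 1

lemma eta_apply (x y : P) : eta P x y = if x < y then 1 else 0 := by
  simp only [eta, IncidenceAlgebra.sub_apply, zeta_apply, one_apply]
  by_cases hle : x ≤ y
  · rcases eq_or_ne x y with rfl | h
    · simp
    · rw [if_pos hle, if_neg h, if_pos (lt_of_le_of_ne hle h)]; ring
  · rw [if_neg hle, if_neg (fun h : x = y => hle h.le),
      if_neg (fun h : x < y => hle h.le)]; ring

/-- The set of chains of length `k` from `x` to `y`. -/
noncomputable def chains (k : ℕ) (x y : P) : Finset (Fin (k + 1) → P) :=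
  univ.filter fun c => StrictMono c ∧ c 0 = x ∧ c (Fin.last k) = y

lemma strictMono_snoc {k : ℕ} {d : Fin (k + 1) → P} {y : P} (hd : StrictMono d)
    (hy : d (Fin.last k) < y) : StrictMono (Fin.snoc d y) := by
  rw [Fin.strictMono_iff_lt_succ]
  intro i
  refine Fin.lastCases ?_ (fun j => ?_) i
  · rw [Fin.succ_last, Fin.snoc_castSucc, Fin.snoc_last]
    exact hy
  · rw [Fin.succ_castSucc, Fin.snoc_castSucc, Fin.snoc_castSucc]
    exact Fin.strictMono_iff_lt_succ.1 hd j

lemma card_chains_succ (k : ℕ) (x y : P) :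
    (chains (k + 1) x y).card = ∑ z ∈ Ico x y, (chains k x z).card := by
  rw [Finset.card_eq_sum_card_fiberwise
    (f := fun c : Fin (k + 2) → P => c (Fin.castSucc (Fin.last k))) (t := Ico x y)]
  · refine Finset.sum_congr rfl fun z hz => ?_
    rw [mem_Ico] at hz
    refine Finset.card_bij' (fun c _ => c ∘ Fin.castSucc) (fun d _ => Fin.snoc d y) ?_ ?_ ?_ ?_
    · intro c hc
      simp only [chains, mem_filter, mem_univ, true_and] at hc ⊢
      obtain ⟨⟨hmono, h0, hl⟩, hz'⟩ := hc
      refine ⟨hmono.comp Fin.strictMono_castSucc, ?_, ?_⟩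
      · show c (Fin.castSucc 0) = x
        rw [Fin.castSucc_zero]; exact h0
      · exact hz'
    · intro d hd
      simp only [chains, mem_filter, mem_univ, true_and] at hd ⊢
      obtain ⟨hmono, h0, hl⟩ := hd
      have hlt : d (Fin.last k) < y := hl ▸ hz.2
      refine ⟨⟨strictMono_snoc hmono hlt, ?_, ?_⟩, ?_⟩
      · rw [show (0 : Fin (k + 2)) = Fin.castSucc 0 from (Fin.castSucc_zero).symm,
          Fin.snoc_castSucc]
        exact h0
      · rw [Fin.snoc_last]
      · rw [Fin.snoc_castSucc]; exact hl
    · intro c hc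
      simp only [chains, mem_filter, mem_univ, true_and] at hc
      funext i
      refine Fin.lastCases ?_ (fun j => ?_) i
      · rw [Fin.snoc_last]; exact hc.1.2.2.symm
      · rw [Fin.snoc_castSucc]; rfl
    · intro d hd
      funext i
      dsimp only [Function.comp]
      rw [Fin.snoc_castSucc]
  · intro c hc
    simp only [chains, Finset.mem_coe, mem_filter, mem_univ, true_and] at hc ⊢
    obtain ⟨hmono, h0, hl⟩ := hc
    rw [mem_Ico]
    constructor
    · calc x = c 0 := h0.symm
        _ ≤ c (Fin.castSucc (Fin.last k)) := hmono.monotone (Fin.zero_le _)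
    · calc c (Fin.castSucc (Fin.last k)) < c (Fin.last (k + 1)) :=
          hmono (Fin.castSucc_lt_last _)
        _ = y := hl

lemma eta_pow_apply (k : ℕ) (x y : P) :
    (eta P ^ k) x y = ((chains k x y).card : ℤ) := by
  induction k generalizing y with
  | zero =>
    rw [pow_zero, one_apply]
    have hlast : (Fin.last 0 : Fin 1) = 0 := rfl
    rcases eq_or_ne x y with rfl | h
    · have : chains 0 x x = {fun _ => x} := by
        ext c
        simp only [chains, mem_filter, mem_univ, true_and, mem_singleton]
        constructor
        · rintro ⟨-, h0, -⟩
          funext i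
          have hi : i = 0 := Fin.ext (by omega)
          rw [hi]; exact h0
        · rintro rfl
          exact ⟨fun a b hab => absurd (Fin.lt_def.mp hab) (by omega), rfl, rfl⟩
      simp [this]
    · have : chains 0 x y = ∅ := by
        ext c
        simp only [chains, mem_filter, mem_univ, true_and, notMem_empty, iff_false]
        rintro ⟨-, h0, hl⟩
        rw [hlast] at hl
        exact h (h0 ▸ hl ▸ rfl)
      simp [this, h]
  | succ k ih =>
    rw [pow_succ, mul_apply]
    have : ∀ z ∈ Icc x y, (eta P ^ k) x z * eta P z y =
        if z < y then ((chains k x z).card : ℤ) else 0 := by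
      intro z _
      rw [ih, eta_apply]
      split_ifs <;> simp
    rw [Finset.sum_congr rfl this, Finset.sum_ite, Finset.sum_const_zero, add_zero,
      card_chains_succ, Nat.cast_sum]
    apply Finset.sum_congr _ fun _ _ => rfl
    ext z
    simp only [mem_filter, mem_Icc, mem_Ico]
    constructor
    · rintro ⟨⟨h1, -⟩, h2⟩; exact ⟨h1, h2⟩
    · rintro ⟨h1, h2⟩; exact ⟨⟨h1, h2.le⟩, h2⟩

lemma chains_subset (k : ℕ) (x y : P) :
    chains k x y ⊆ univ.filter fun c : Fin (k + 1) → P => StrictMono c := by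
  intro c hc
  simp only [chains, mem_filter] at hc ⊢
  exact ⟨hc.1, hc.2.1⟩

lemma strictMono_filter_eq_empty {k : ℕ} (hk : Fintype.card P ≤ k) :
    (univ.filter fun c : Fin (k + 1) → P => StrictMono c) = ∅ := by
  ext c
  simp only [mem_filter, mem_univ, true_and, notMem_empty, iff_false]
  intro hc
  have := Fintype.card_le_of_injective c hc.injective
  simp only [Fintype.card_fin] at this
  omega

lemma eta_pow_card : eta P ^ Fintype.card P = 0 := by
  ext x y _
  rw [eta_pow_apply, IncidenceAlgebra.zero_apply]
  have h0 : (chains (Fintype.card P) x y).card = 0 := by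
    rw [Finset.card_eq_zero]
    have := chains_subset (Fintype.card P) x y
    rw [strictMono_filter_eq_empty le_rfl] at this
    exact Finset.subset_empty.1 this
  simp [h0]

lemma sum_apply {ι : Type*} (s : Finset ι) (f : ι → IncidenceAlgebra ℤ P) (x y : P) :
    (∑ i ∈ s, f i) x y = ∑ i ∈ s, f i x y := by
  induction s using Finset.cons_induction with
  | empty => simp [IncidenceAlgebra.zero_apply]
  | cons a s ha ih => rw [Finset.sum_cons, Finset.sum_cons, IncidenceAlgebra.add_apply, ih]

lemma mu_eq_sum : (mu ℤ : IncidenceAlgebra ℤ P) =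
    ∑ k ∈ Finset.range (Fintype.card P), ((-1 : ℤ) ^ k) • eta P ^ k := by
  set N := Fintype.card P
  set S : IncidenceAlgebra ℤ P := ∑ k ∈ Finset.range N, ((-1 : ℤ) ^ k) • eta P ^ k with hS
  have hzeta : (zeta ℤ : IncidenceAlgebra ℤ P) = 1 + eta P := by
    rw [eta, add_comm, sub_add_cancel]
  have hzs : (zeta ℤ : IncidenceAlgebra ℤ P) * S = 1 := by
    have expand : (zeta ℤ : IncidenceAlgebra ℤ P) * S =
        ∑ k ∈ Finset.range N, (((-1 : ℤ) ^ k) • eta P ^ k - ((-1 : ℤ) ^ (k + 1)) • eta P ^ (k + 1)) := by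
      rw [hzeta, add_mul, one_mul, hS, Finset.mul_sum, ← Finset.sum_add_distrib]
      refine Finset.sum_congr rfl fun k _ => ?_
      rw [mul_smul_comm, ← pow_succ', pow_succ (-1 : ℤ), mul_neg_one, neg_smul, sub_neg_eq_add]
    rw [expand, Finset.sum_range_sub']
    have h0 : eta P ^ N = 0 := eta_pow_card
    simp [h0]
  calc (mu ℤ : IncidenceAlgebra ℤ P) = mu ℤ * 1 := (mul_one _).symm
    _ = mu ℤ * (zeta ℤ * S) := by rw [hzs]
    _ = (mu ℤ * zeta ℤ) * S := (mul_assoc _ _ _).symm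
    _ = 1 * S := by rw [mu_mul_zeta]
    _ = S := one_mul S

lemma sum_pairs_card_chains (k : ℕ) :
    ∑ p ∈ univ.filter (fun p : P × P => p.1 ≤ p.2), (chains k p.1 p.2).card =
      (univ.filter fun c : Fin (k + 1) → P => StrictMono c).card := by
  rw [Finset.card_eq_sum_card_fiberwise
    (f := fun c : Fin (k + 1) → P => (c 0, c (Fin.last k)))
    (t := univ.filter fun p : P × P => p.1 ≤ p.2)]
  · refine Finset.sum_congr rfl fun p _ => ?_
    congr 1
    ext c
    simp only [chains, mem_filter, mem_univ, true_and, Prod.ext_iff]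
    try tauto
  · intro c hc
    simp only [Finset.mem_coe, mem_filter, mem_univ, true_and] at hc ⊢
    exact hc.monotone (Fin.zero_le _)

end EulerCharAux

open EulerCharAux

/-- For a finite poset, the sum of all Möbius function values `μ(x,y)` over pairs `x ≤ y`
equals the alternating sum of the total numbers of chains of each length: the Euler
characteristic of the order complex. -/
theorem sum_mu_eq_alternating_sum_chains (P : Type*) [PartialOrder P] [Fintype P]
    [LocallyFiniteOrder P] [DecidableEq P] [DecidableRel ((· ≤ ·) : P → P → Prop)] :
    ∑ p ∈ Finset.univ.filter (fun p : P × P => p.1 ≤ p.2), mu ℤ p.1 p.2 =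
      ∑ᶠ k : ℕ, (-1 : ℤ) ^ k * (Nat.card {c : Fin (k + 1) → P // StrictMono c} : ℤ) := by
  set N := Fintype.card P
  have hcard : ∀ k : ℕ, (Nat.card {c : Fin (k + 1) → P // StrictMono c} : ℤ) =
      ((Finset.univ.filter fun c : Fin (k + 1) → P => StrictMono c).card : ℤ) := by
    intro k
    rw [Nat.card_eq_fintype_card, Fintype.card_subtype]
  have hzero : ∀ k, N ≤ k → (-1 : ℤ) ^ k * (Nat.card {c : Fin (k + 1) → P // StrictMono c} : ℤ) = 0 := by
    intro k hk
    rw [hcard k, strictMono_filter_eq_empty hk]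
    simp
  have hfin : ∑ᶠ k : ℕ, (-1 : ℤ) ^ k * (Nat.card {c : Fin (k + 1) → P // StrictMono c} : ℤ) =
      ∑ k ∈ Finset.range N, (-1 : ℤ) ^ k * (Nat.card {c : Fin (k + 1) → P // StrictMono c} : ℤ) := by
    apply finsum_eq_sum_of_support_subset
    intro k hk
    simp only [Function.mem_support] at hk
    simp only [Finset.coe_range, Set.mem_Iio]
    by_contra h
    exact hk (hzero k (le_of_not_gt h))
  rw [hfin]
  have lhs_eq : ∑ p ∈ Finset.univ.filter (fun p : P × P => p.1 ≤ p.2), mu ℤ p.1 p.2 =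
      ∑ k ∈ Finset.range N, (-1 : ℤ) ^ k *
        ∑ p ∈ Finset.univ.filter (fun p : P × P => p.1 ≤ p.2), ((chains k p.1 p.2).card : ℤ) := by
    have : ∀ p ∈ Finset.univ.filter (fun p : P × P => p.1 ≤ p.2),
        mu ℤ p.1 p.2 = ∑ k ∈ Finset.range N, (-1 : ℤ) ^ k * ((chains k p.1 p.2).card : ℤ) := by
      intro p _
      rw [mu_eq_sum, EulerCharAux.sum_apply]
      refine Finset.sum_congr rfl fun k _ => ?_
      rw [constSMul_apply, eta_pow_apply, smul_eq_mul]
    rw [Finset.sum_congr rfl this, Finset.sum_comm]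
    refine Finset.sum_congr rfl fun k _ => ?_
    rw [Finset.mul_sum]
  rw [lhs_eq]
  refine Finset.sum_congr rfl fun k _ => ?_
  rw [hcard k, ← sum_pairs_card_chains k, Nat.cast_sum]
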